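/- Let N ≥ 2 and suppose in ℝ^N we are given 2N pairs of cusps (each pair determined by a hypersurface a_m·x_{i_m} = x_{j_m}^{α_m} with i_m ≠ j_m, a_m > 0, α_m > 1, m = 1, …, 2N). Then, near the origin, these 2N pairs do not intersect all-to-all; in fact already among any N of them some choice of one cusp from each pair has empty common intersection in a sufficiently small neighbourhood of the origin (given the genericity condition that no exponent product relations create coinciding boundary curves). -/

import Mathlib

private def Dseq (β γ : ℕ → ℝ) (c : ℕ) : ℕ → ℝ
  | 0 => 0
  | n+1 => β (c+n) * Dseq β γ c n + γ (c+n)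

private lemma chain_lemma (β γ : ℕ → ℝ) (hβ : ∀ t, 0 < β t) (u : ℕ → ℝ) (c b : ℕ)
    (hstep : ∀ t, c ≤ t → t < b → u (t+1) < β t * u t + γ t) :
    ∀ n, 0 < n → c + n ≤ b →
      u (c+n) < (∏ k ∈ Finset.range n, β (c+k)) * u c + Dseq β γ c n := by
  intro n
  induction n with
  | zero => intro h; exact absurd h (lt_irrefl 0)
  | succ n ih =>
    intro _ hle
    rcases Nat.eq_zero_or_pos n with h0 | hpos
    · subst h0
      have h := hstep c le_rfl (by omega)
      simpa [Dseq] using h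
    · have h1 := ih hpos (by omega)
      have h2 := hstep (c+n) (by omega) (by omega)
      have h3 := mul_lt_mul_of_pos_left h1 (hβ (c+n))
      have h4 : u (c+n+1) <
          β (c+n) * ((∏ k ∈ Finset.range n, β (c+k)) * u c + Dseq β γ c n) + γ (c+n) := by
        linarith
      calc u (c+(n+1)) = u (c+n+1) := rfl
        _ < _ := h4
        _ = (∏ k ∈ Finset.range (n+1), β (c+k)) * u c + Dseq β γ c (n+1) := by
            rw [Finset.prod_range_succ, show Dseq β γ c (n+1) = β (c+n) * Dseq β γ c n + γ (c+n) from rfl]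
            ring

private lemma key (N : ℕ) (i j : Fin (2 * N) → Fin N) (hij : ∀ m, i m ≠ j m)
    (a α : Fin (2 * N) → ℝ) (ha : ∀ m, 0 < a m) (hα : ∀ m, 1 < α m)
    (hgen : Function.Injective (fun t : Finset (Fin (2 * N)) => ∏ m ∈ t, α m)) :
    ∀ (n : ℕ) (V : Finset (Fin N)) (E : Finset (Fin (2 * N))),
      V.card ≤ n → (∀ m ∈ E, i m ∈ V ∧ j m ∈ V) → V.card ≤ E.card → E.Nonempty →
      ∃ s : Fin (2 * N) → Bool, ∃ δ > 0, ¬ ∃ x : Fin N → ℝ,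
        (∀ p, 0 < x p ∧ x p < δ) ∧
        ∀ m ∈ E, (if s m then a m * x (i m) < x (j m) ^ α m
                  else a m * x (i m) > x (j m) ^ α m) := by
  intro n
  induction n with
  | zero =>
    intro V E hVn hend _ hEne
    obtain ⟨m0, hm0⟩ := hEne
    have hV : V = ∅ := Finset.card_eq_zero.mp (Nat.le_zero.mp hVn)
    have := (hend m0 hm0).1
    rw [hV] at this
    exact absurd this (Finset.notMem_empty _)
  | succ n ih =>
    intro V E hVn hend hcard hEne
    classical
    obtain ⟨m0, hm0⟩ := hEne
    have hVtwo : 2 ≤ V.card := by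
      rw [show (2:ℕ) = 1 + 1 from rfl]
      exact Finset.one_lt_card.mpr ⟨i m0, (hend m0 hm0).1, j m0, (hend m0 hm0).2, hij m0⟩
    by_cases hdeg : ∀ v ∈ V, 2 ≤ (E.filter fun m => i m = v ∨ j m = v).card
    · -- case B : all degrees ≥ 2
      obtain ⟨other, hother⟩ : ∃ f : Fin N → Fin (2 * N) → Fin N,
          ∀ v m, f v m = if i m = v then j m else i m := ⟨_, fun _ _ => rfl⟩
      have hnext0 : ∀ v m, ∃ m', v ∈ V → (m' ∈ E ∧ (i m' = v ∨ j m' = v) ∧ m' ≠ m) := by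
        intro v m
        by_cases hv : v ∈ V
        · obtain ⟨m', hm', hne⟩ :=
            Finset.exists_mem_ne (s := E.filter fun m => i m = v ∨ j m = v)
              (by have := hdeg v hv; omega) m
          exact ⟨m', fun _ => ⟨(Finset.mem_filter.mp hm').1, (Finset.mem_filter.mp hm').2, hne⟩⟩
        · exact ⟨m0, fun h => absurd h hv⟩
      choose next hnext using hnext0
      obtain ⟨vs, es, hvs0, hes0, hvss, hess⟩ :
          ∃ (vs : ℕ → Fin N) (es : ℕ → Fin (2 * N)), vs 0 = i m0 ∧ es 0 = m0 ∧
            (∀ t, vs (t+1) = other (vs t) (es t)) ∧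
            (∀ t, es (t+1) = next (vs (t+1)) (es t)) := by
        refine ⟨fun n => (Nat.rec (motive := fun _ => Fin N × Fin (2 * N)) (i m0, m0)
                  (fun _ q => (other q.1 q.2, next (other q.1 q.2) q.2)) n).1,
                fun n => (Nat.rec (motive := fun _ => Fin N × Fin (2 * N)) (i m0, m0)
                  (fun _ q => (other q.1 q.2, next (other q.1 q.2) q.2)) n).2,
                rfl, rfl, fun t => rfl, fun t => rfl⟩
      have hotherV : ∀ v m, m ∈ E → other v m ∈ V := by
        intro v m hm
        rw [hother]
        split
        · exact (hend m hm).2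
        · exact (hend m hm).1
      have hinv : ∀ t, vs t ∈ V ∧ es t ∈ E ∧ (i (es t) = vs t ∨ j (es t) = vs t) := by
        intro t
        induction t with
        | zero => rw [hvs0, hes0]; exact ⟨(hend m0 hm0).1, hm0, Or.inl rfl⟩
        | succ t iht =>
          have hV1 : vs (t+1) ∈ V := by rw [hvss t]; exact hotherV _ _ iht.2.1
          have hn := hnext (vs (t+1)) (es t) hV1
          rw [← hess t] at hn
          exact ⟨hV1, hn.1, hn.2.1⟩
      have hene : ∀ t, es (t+1) ≠ es t := by
        intro t
        have hn := hnext (vs (t+1)) (es t) (hinv (t+1)).1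
        rw [← hess t] at hn
        exact hn.2.2
      have hfwd_other : ∀ t, j (es t) = vs t → vs (t+1) = i (es t) := by
        intro t hf
        rw [hvss t, hother, if_neg]
        intro h
        exact hij (es t) (h.trans hf.symm)
      have hbwd_other : ∀ t, i (es t) = vs t → vs (t+1) = j (es t) := by
        intro t hf
        rw [hvss t, hother, if_pos hf]
      -- pigeonhole : the walk revisits a vertex
      have hpig : ∃ b, ∃ c, c < b ∧ vs c = vs b := by
        obtain ⟨x, _, y, _, hxy, hveq⟩ :=
          Finset.exists_ne_map_eq_of_card_lt_of_maps_to
            (s := Finset.range (V.card + 1)) (t := V) (by simp) (fun t _ => (hinv t).1)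
        rcases lt_or_gt_of_ne hxy with h | h
        exacts [⟨y, x, h, hveq⟩, ⟨x, y, h, hveq.symm⟩]
      set b := Nat.find hpig with hbdef
      obtain ⟨c, hcb, hvcb⟩ := Nat.find_spec hpig
      have hinj : ∀ s t, s < t → t < b → vs s ≠ vs t := by
        intro s t h1 h2 he
        exact Nat.find_min hpig h2 ⟨s, h1, he⟩
      have hedist : ∀ s t, s < t → t < b → es s ≠ es t := by
        intro s t h1 h2 he
        rcases eq_or_lt_of_le (Nat.succ_le_of_lt h1) with hc | hc
        · rw [← hc] at he
          exact hene s he.symm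
        · have hvne : vs s ≠ vs t := hinj s t h1 h2
          have hinc_t := (hinv t).2.2
          rw [← he] at hinc_t
          have hv : vs (s+1) = vs t := by
            by_cases hi : i (es s) = vs s
            · rcases hinc_t with h' | h'
              · exact absurd (hi ▸ h' ▸ rfl : vs s = vs t) hvne
              · rw [hbwd_other s hi]; exact h'
            · have hjj : j (es s) = vs s := ((hinv s).2.2).resolve_left hi
              rcases hinc_t with h' | h'
              · rw [hfwd_other s hjj]; exact h'
              · exact absurd (hjj ▸ h' ▸ rfl : vs s = vs t) hvne
          exact hinj (s+1) t hc h2 hv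
      -- weights along the walk
      obtain ⟨β, hβ⟩ : ∃ f : ℕ → ℝ, ∀ t,
          f t = if j (es t) = vs t then α (es t) else (α (es t))⁻¹ := ⟨_, fun _ => rfl⟩
      obtain ⟨γ, hγ⟩ : ∃ f : ℕ → ℝ, ∀ t,
          f t = if j (es t) = vs t then -Real.log (a (es t))
                else Real.log (a (es t)) * (α (es t))⁻¹ := ⟨_, fun _ => rfl⟩
      have hβpos : ∀ t, 0 < β t := by
        intro t
        rw [hβ]
        have := hα (es t)
        split
        · linarith
        · have : (0:ℝ) < α (es t) := by linarith
          exact inv_pos.mpr this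
      obtain ⟨B, hBdef⟩ : ∃ B : ℝ, B = ∏ k ∈ Finset.range (b - c), β (c + k) := ⟨_, rfl⟩
      have hBpos : 0 < B := by
        rw [hBdef]; exact Finset.prod_pos fun k _ => hβpos _
      have hBne1 : B ≠ 1 := by
        intro hB1
        have hinjes : ∀ s ∈ Finset.Ico c b, ∀ t ∈ Finset.Ico c b, es s = es t → s = t := by
          intro s hs t ht he
          by_contra hne
          rcases lt_or_gt_of_ne hne with h | h
          · exact hedist s t h (Finset.mem_Ico.mp ht).2 he
          · exact hedist t s h (Finset.mem_Ico.mp hs).2 he.symm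
        have hIco : B = ∏ t ∈ Finset.Ico c b, β t := by
          rw [hBdef, Finset.prod_Ico_eq_prod_range]
        set F := (Finset.Ico c b).filter (fun t => j (es t) = vs t) with hFdef
        set W := (Finset.Ico c b).filter (fun t => ¬ j (es t) = vs t) with hWdef
        have hsplit : B = (∏ t ∈ F, α (es t)) * ∏ t ∈ W, (α (es t))⁻¹ := by
          rw [hIco,
            ← Finset.prod_filter_mul_prod_filter_not (Finset.Ico c b) (fun t => j (es t) = vs t)]
          congr 1
          · refine Finset.prod_congr rfl (fun t ht => ?_)
            rw [hβ, if_pos (Finset.mem_filter.mp ht).2]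
          · refine Finset.prod_congr rfl (fun t ht => ?_)
            rw [hβ, if_neg (Finset.mem_filter.mp ht).2]
        rw [hB1, Finset.prod_inv_distrib] at hsplit
        have hPW : (0:ℝ) < ∏ t ∈ W, α (es t) :=
          Finset.prod_pos (fun t _ => by linarith [hα (es t)])
        have h2 : (∏ t ∈ F, α (es t)) = ∏ t ∈ W, α (es t) :=
          (mul_inv_eq_one₀ hPW.ne').mp hsplit.symm
        have hFinj : ∀ s ∈ F, ∀ t ∈ F, es s = es t → s = t := fun s hs t ht he =>
          hinjes s (Finset.mem_of_mem_filter _ hs) t (Finset.mem_of_mem_filter _ ht) he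
        have hWinj : ∀ s ∈ W, ∀ t ∈ W, es s = es t → s = t := fun s hs t ht he =>
          hinjes s (Finset.mem_of_mem_filter _ hs) t (Finset.mem_of_mem_filter _ ht) he
        have hprodEq : ∏ m ∈ F.image es, α m = ∏ m ∈ W.image es, α m := by
          rw [Finset.prod_image hFinj, Finset.prod_image hWinj]
          exact h2
        have hsetEq : F.image es = W.image es := hgen hprodEq
        have hcmem : c ∈ Finset.Ico c b := Finset.mem_Ico.mpr ⟨le_rfl, hcb⟩
        by_cases hfc : j (es c) = vs c
        · have h3 : es c ∈ F.image es :=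
            Finset.mem_image_of_mem es (Finset.mem_filter.mpr ⟨hcmem, hfc⟩)
          rw [hsetEq] at h3
          obtain ⟨t, htW, hte⟩ := Finset.mem_image.mp h3
          obtain ⟨htI, htP⟩ := Finset.mem_filter.mp htW
          have htc : t = c := hinjes t htI c hcmem hte
          rw [htc] at htP
          exact htP hfc
        · have h3 : es c ∈ W.image es :=
            Finset.mem_image_of_mem es (Finset.mem_filter.mpr ⟨hcmem, hfc⟩)
          rw [← hsetEq] at h3
          obtain ⟨t, htF, hte⟩ := Finset.mem_image.mp h3
          obtain ⟨htI, htP⟩ := Finset.mem_filter.mp htF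
          have htc : t = c := hinjes t htI c hcmem hte
          rw [htc] at htP
          exact hfc htP
      -- choice of sign
      obtain ⟨ε, hεcases⟩ : ∃ ε : ℝ, (ε = 1 ∧ 1 < B) ∨ (ε = -1 ∧ B < 1) := by
        rcases hBne1.lt_or_gt with h | h
        exacts [⟨-1, Or.inr ⟨rfl, h⟩⟩, ⟨1, Or.inl ⟨rfl, h⟩⟩]
      obtain ⟨sb, hsbdef⟩ : ∃ sb : Bool, sb = (if 1 < B then true else false) := ⟨_, rfl⟩
      obtain ⟨sfun, hsfun⟩ : ∃ f : Fin (2 * N) → Bool, ∀ m,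
          f m = if (∃ t, t ∈ Finset.Ico c b ∧ es t = m ∧ j m = vs t) then sb else !sb :=
        ⟨_, fun _ => rfl⟩
      obtain ⟨C, hCdef⟩ : ∃ C : ℝ, C = Dseq β (fun t => ε * γ t) c (b - c) := ⟨_, rfl⟩
      refine ⟨sfun, Real.exp (ε * C / (1 - B)), Real.exp_pos _, ?_⟩
      rintro ⟨x, hx1, hx2⟩
      have hxpos : ∀ p, 0 < x p := fun p => (hx1 p).1
      have hstep : ∀ t, c ≤ t → t < b →
          ε * Real.log (x (vs (t+1))) < β t * (ε * Real.log (x (vs t))) + ε * γ t := by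
        intro t htc htb
        have hme : es t ∈ E := (hinv t).2.1
        have hcon := hx2 (es t) hme
        have hαpos : 0 < α (es t) := by linarith [hα (es t)]
        by_cases hf : j (es t) = vs t
        · -- forward edge
          have hvt1 : vs (t+1) = i (es t) := hfwd_other t hf
          have hsm : sfun (es t) = sb := by
            rw [hsfun, if_pos ⟨t, Finset.mem_Ico.mpr ⟨htc, htb⟩, rfl, hf⟩]
          rw [hβ, hγ, if_pos hf, if_pos hf, hvt1, ← hf]
          rcases hεcases with ⟨hε, hBgt⟩ | ⟨hε, hBlt⟩
          · have hsb : sb = true := by rw [hsbdef, if_pos hBgt]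
            rw [hsm, hsb] at hcon
            simp at hcon
            have hlog := Real.log_lt_log (mul_pos (ha _) (hxpos _)) hcon
            rw [Real.log_mul (ha _).ne' (hxpos _).ne', Real.log_rpow (hxpos _)] at hlog
            rw [hε]
            ring_nf
            ring_nf at hlog
            linarith
          · have hsb : sb = false := by
              rw [hsbdef, if_neg (by linarith : ¬ 1 < B)]
            rw [hsm, hsb] at hcon
            simp at hcon
            have hlog := Real.log_lt_log (Real.rpow_pos_of_pos (hxpos _) _) hcon
            rw [Real.log_mul (ha _).ne' (hxpos _).ne', Real.log_rpow (hxpos _)] at hlog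
            rw [hε]
            ring_nf
            ring_nf at hlog
            linarith
        · -- backward edge
          have hi : i (es t) = vs t := ((hinv t).2.2).resolve_right hf
          have hvt1 : vs (t+1) = j (es t) := hbwd_other t hi
          have hnf : ¬ (∃ t', t' ∈ Finset.Ico c b ∧ es t' = es t ∧ j (es t) = vs t') := by
            rintro ⟨t', ht'mem, ht'e, ht'j⟩
            obtain ⟨h1', h2'⟩ := Finset.mem_Ico.mp ht'mem
            have htt : t' = t := by
              by_contra hne
              rcases lt_or_gt_of_ne hne with h | h
              · exact hedist t' t h htb ht'e
              · exact hedist t t' h h2' ht'e.symm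
            rw [htt] at ht'j
            exact hf ht'j
          have hsm : sfun (es t) = !sb := by rw [hsfun, if_neg hnf]
          rw [hβ, hγ, if_neg hf, if_neg hf, hvt1, ← hi]
          rcases hεcases with ⟨hε, hBgt⟩ | ⟨hε, hBlt⟩
          · have hsb : sb = true := by rw [hsbdef, if_pos hBgt]
            rw [hsm, hsb] at hcon
            simp at hcon
            have hlog := Real.log_lt_log (Real.rpow_pos_of_pos (hxpos _) _) hcon
            rw [Real.log_mul (ha _).ne' (hxpos _).ne', Real.log_rpow (hxpos _)] at hlog
            rw [hε]
            refine (mul_lt_mul_iff_of_pos_right hαpos).mp ?_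
            have hαne : α (es t) ≠ 0 := ne_of_gt hαpos
            have hexp : ((α (es t))⁻¹ * (1 * Real.log (x (i (es t)))) +
                1 * (Real.log (a (es t)) * (α (es t))⁻¹)) * α (es t)
                = Real.log (x (i (es t))) + Real.log (a (es t)) := by
              field_simp
            rw [hexp]
            ring_nf
            ring_nf at hlog
            linarith
          · have hsb : sb = false := by
              rw [hsbdef, if_neg (by linarith : ¬ 1 < B)]
            rw [hsm, hsb] at hcon
            simp at hcon
            have hlog := Real.log_lt_log (mul_pos (ha _) (hxpos _)) hcon
            rw [Real.log_mul (ha _).ne' (hxpos _).ne', Real.log_rpow (hxpos _)] at hlog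
            rw [hε]
            refine (mul_lt_mul_iff_of_pos_right hαpos).mp ?_
            have hαne : α (es t) ≠ 0 := ne_of_gt hαpos
            have hexp : ((α (es t))⁻¹ * (-1 * Real.log (x (i (es t)))) +
                -1 * (Real.log (a (es t)) * (α (es t))⁻¹)) * α (es t)
                = -(Real.log (x (i (es t))) + Real.log (a (es t))) := by
              field_simp
              ring
            rw [hexp]
            ring_nf
            ring_nf at hlog
            linarith
      have hchain := chain_lemma β (fun t => ε * γ t) hβpos
        (fun t => ε * Real.log (x (vs t))) c b hstep (b - c) (by omega) (by omega)
      simp only [Nat.add_sub_cancel' (show c ≤ b from hcb.le)] at hchain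
      rw [← hBdef, ← hCdef, ← hvcb] at hchain
      have hxlt : Real.log (x (vs c)) < ε * C / (1 - B) := by
        have h := Real.log_lt_log (hx1 (vs c)).1 (hx1 (vs c)).2
        rwa [Real.log_exp] at h
      rcases hεcases with ⟨hε, hBgt⟩ | ⟨hε, hBlt⟩
      · rw [hε, one_mul] at hchain hxlt
        have h1B : 1 - B < 0 := by linarith
        have h2 : C < Real.log (x (vs c)) * (1 - B) := (lt_div_iff_of_neg h1B).mp hxlt
        nlinarith [hchain, h2]
      · rw [hε] at hchain hxlt
        have h1B : 0 < 1 - B := by linarith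
        have h2 : Real.log (x (vs c)) * (1 - B) < -1 * C := (lt_div_iff₀ h1B).mp hxlt
        nlinarith [hchain, h2]
    · -- case A : some vertex of degree ≤ 1, peel it off
      push_neg at hdeg
      obtain ⟨v, hvV, hdlt⟩ := hdeg
      interval_cases h : (E.filter fun m => i m = v ∨ j m = v).card
      · -- degree 0
        have hfe : (E.filter fun m => i m = v ∨ j m = v) = ∅ := Finset.card_eq_zero.mp h
        have hnot : ∀ m ∈ E, ¬(i m = v ∨ j m = v) := by
          intro m hm hP
          have : m ∈ (E.filter fun m => i m = v ∨ j m = v) := Finset.mem_filter.mpr ⟨hm, hP⟩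
          rw [hfe] at this
          exact absurd this (Finset.notMem_empty _)
        refine ih (V.erase v) E ?_ ?_ ?_ ⟨m0, hm0⟩
        · rw [Finset.card_erase_of_mem hvV]; omega
        · intro m hm
          have h2 := hnot m hm
          push_neg at h2
          exact ⟨Finset.mem_erase.mpr ⟨h2.1, (hend m hm).1⟩,
                 Finset.mem_erase.mpr ⟨h2.2, (hend m hm).2⟩⟩
        · rw [Finset.card_erase_of_mem hvV]; omega
      · -- degree 1
        obtain ⟨m1, hm1⟩ := Finset.card_eq_one.mp h
        have hm1E : m1 ∈ E := Finset.mem_of_mem_filter m1 (hm1 ▸ Finset.mem_singleton_self m1)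
        have hnot : ∀ m ∈ E, m ≠ m1 → ¬(i m = v ∨ j m = v) := by
          intro m hm hne hP
          have : m ∈ (E.filter fun m => i m = v ∨ j m = v) := Finset.mem_filter.mpr ⟨hm, hP⟩
          rw [hm1] at this
          exact hne (Finset.mem_singleton.mp this)
        have ha1 : (V.erase v).card ≤ n := by
          rw [Finset.card_erase_of_mem hvV]; omega
        have ha2 : ∀ m ∈ E.erase m1, i m ∈ V.erase v ∧ j m ∈ V.erase v := by
          intro m hm
          obtain ⟨hne, hmE⟩ := Finset.mem_erase.mp hm
          have h2 := hnot m hmE hne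
          push_neg at h2
          exact ⟨Finset.mem_erase.mpr ⟨h2.1, (hend m hmE).1⟩,
                 Finset.mem_erase.mpr ⟨h2.2, (hend m hmE).2⟩⟩
        have ha3 : (V.erase v).card ≤ (E.erase m1).card := by
          rw [Finset.card_erase_of_mem hvV, Finset.card_erase_of_mem hm1E]; omega
        have ha4 : (E.erase m1).Nonempty := by
          rw [← Finset.card_pos, Finset.card_erase_of_mem hm1E]; omega
        obtain ⟨s, δ, hδ, hbad⟩ := ih (V.erase v) (E.erase m1) ha1 ha2 ha3 ha4
        refine ⟨s, δ, hδ, ?_⟩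
        rintro ⟨x, hx1, hx2⟩
        exact hbad ⟨x, hx1, fun m hm => hx2 m (Finset.mem_of_mem_erase hm)⟩

theorem stmt_19 (N : ℕ) (hN : 2 ≤ N)
    (i j : Fin (2 * N) → Fin N) (hij : ∀ m, i m ≠ j m)
    (a α : Fin (2 * N) → ℝ) (ha : ∀ m, 0 < a m) (hα : ∀ m, 1 < α m)
    (hgen : Function.Injective (fun t : Finset (Fin (2 * N)) => ∏ m ∈ t, α m)) :
    ∀ T : Finset (Fin (2 * N)), T.card = N →
      ∃ (s : Fin (2 * N) → Bool), ∃ δ > 0, ¬ ∃ x : Fin N → ℝ,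
        (∀ p, 0 < x p ∧ x p < δ) ∧
        ∀ m ∈ T, (if s m then a m * x (i m) < x (j m) ^ α m
                  else a m * x (i m) > x (j m) ^ α m) := by
  intro T hT
  refine key N i j hij a α ha hα hgen N Finset.univ T ?_ ?_ ?_ ?_
  · simp
  · exact fun m _ => ⟨Finset.mem_univ _, Finset.mem_univ _⟩
  · simp [hT]
  · rw [← Finset.card_pos, hT]; omega
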